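/- arXiv:1911.01954 — 2 statements merged into one kernel-verified Lean document; each statement's English description precedes it below -/
import Mathlib

section
/- Let p₁ = 0.4594. For every natural number k with k ≠ 1, the probability that a binomial random variable with parameters k and p₁ exceeds k/2 is at most the probability that a binomial random variable with parameters 3 and p₁ is at least 2; the latter probability equals 3p₁² − 2p₁³. -/
/-- The probability that a binomial random variable with parameters `n` and `p`
takes a value in the set of `i ∈ {0, …, n}` satisfying `P i`. -/
def binomialProb (n : ℕ) (p : ℝ) (P : ℕ → Prop) [DecidablePred P] : ℝ :=
  ∑ i ∈ (Finset.range (n + 1)).filter P,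
    (n.choose i : ℝ) * p ^ i * (1 - p) ^ (n - i)

/-! ### Auxiliary definitions and lemmas -/

/-- The numerator of the majority probability for `B(k, 0.4594)` over `10000^k`. -/
def Nk (k : ℕ) : ℕ :=
  ∑ i ∈ (Finset.range (k+1)).filter (fun i => k < 2*i),
    k.choose i * 4594^i * 5406^(k-i)

set_option exponentiation.threshold 400 in
set_option maxRecDepth 100000 in
theorem Nk_small_le : ∀ k < 80, k ≠ 1 → Nk k * 10^12 ≤ 439233846832 * 10^(4*k) := by
  decide

/-- `(3j+1) * C(2j,j)^2 ≤ 16^j`. -/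
theorem cb_sq (j : ℕ) : (3*j+1) * (Nat.centralBinom j)^2 ≤ 16^j := by
  induction j with
  | zero => simp [Nat.centralBinom]
  | succ n ih =>
    have h := Nat.succ_mul_centralBinom_succ n
    have h2 : ((n+1) * Nat.centralBinom (n+1))^2 = (2*(2*n+1))^2 * (Nat.centralBinom n)^2 := by
      rw [h]; ring
    have hpos : 0 < (n+1)^2 := by positivity
    have key : (3*(n+1)+1) * (Nat.centralBinom (n+1))^2 * (n+1)^2 ≤ 16^(n+1) * (n+1)^2 := by
      calc (3*(n+1)+1) * (Nat.centralBinom (n+1))^2 * (n+1)^2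
          = (3*n+4) * ((n+1) * Nat.centralBinom (n+1))^2 := by ring
        _ = (3*n+4) * (2*(2*n+1))^2 * (Nat.centralBinom n)^2 := by rw [h2]; ring
        _ ≤ 16 * (n+1)^2 * ((3*n+1) * (Nat.centralBinom n)^2) := by
            nlinarith [sq_nonneg (Nat.centralBinom n)]
        _ ≤ 16 * (n+1)^2 * 16^n := Nat.mul_le_mul_left _ ih
        _ = 16^(n+1) * (n+1)^2 := by ring
    exact Nat.le_of_mul_le_mul_right key hpos

/-- Binomial coefficients are antitone past the middle. -/
lemma choose_anti {k m i : ℕ} (h2m : k < 2*m) (hmi : m ≤ i) :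
    k.choose i ≤ k.choose m := by
  induction i, hmi using Nat.le_induction with
  | base => exact le_refl _
  | succ i hmi ih =>
    refine le_trans ?_ ih
    rcases le_or_gt k i with hk | hk
    · rw [Nat.choose_eq_zero_of_lt (by omega)]; exact Nat.zero_le _
    · have h := Nat.choose_succ_right_eq k i
      have hki : k - i ≤ i + 1 := by omega
      have h2 : k.choose (i+1) * (i+1) ≤ k.choose i * (i+1) := by
        rw [h]; exact Nat.mul_le_mul_left _ hki
      exact Nat.le_of_mul_le_mul_right h2 (by omega)

lemma binomialProb_cast (k : ℕ) :
    binomialProb k 0.4594 (fun i => k < 2*i) = (Nk k : ℝ) / 10000^k := by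
  unfold binomialProb Nk
  rw [Nat.cast_sum, Finset.sum_div]
  refine Finset.sum_congr rfl fun i hi => ?_
  have hik : i ≤ k := by
    simp only [Finset.mem_filter, Finset.mem_range] at hi; omega
  have h1 : (0.4594:ℝ) = 4594/10000 := by norm_num
  have h2 : (1 - (4594/10000):ℝ) = 5406/10000 := by norm_num
  rw [h1, h2, div_pow, div_pow]
  have hsplit : (10000:ℝ)^k = 10000^i * 10000^(k-i) := by
    rw [← pow_add]; congr 1; omega
  push_cast
  rw [hsplit]
  field_simp

/-- Geometric-series tail bound for the majority probability. -/
lemma tail_le (k : ℕ) (hk : 1 ≤ k) :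
    binomialProb k 0.4594 (fun i => k < 2*i) ≤
      (k.choose (k/2+1) : ℝ) * (4594/10000)^(k/2+1) * (5406/10000)^(k-(k/2+1))
        * (5406/812) := by
  set m := k/2+1 with hm
  have hmk : m ≤ k := by omega
  have hfil : (Finset.range (k+1)).filter (fun i => k < 2*i) = Finset.Ico m (k+1) := by
    ext i
    simp only [Finset.mem_filter, Finset.mem_range, Finset.mem_Ico]
    omega
  rw [binomialProb, hfil]
  have key : ∀ i ∈ Finset.Ico m (k+1),
      (k.choose i : ℝ) * (0.4594:ℝ)^i * (1-0.4594)^(k-i)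
        ≤ (k.choose m : ℝ) * (4594/10000)^m * (5406/10000)^(k-m) * (4594/5406)^(i-m) := by
    intro i hi
    simp only [Finset.mem_Ico] at hi
    obtain ⟨hmi, hik⟩ := hi
    have hik' : i ≤ k := by omega
    have h1 : (0.4594:ℝ) = 4594/10000 := by norm_num
    have h2 : (1-(4594/10000):ℝ) = 5406/10000 := by norm_num
    rw [h1, h2]
    have hterm : (4594/10000:ℝ)^i * (5406/10000)^(k-i)
        = (4594/10000)^m * (5406/10000)^(k-m) * (4594/5406)^(i-m) := by
      have e1 : (4594/10000:ℝ)^i = (4594/10000)^m * (4594/10000)^(i-m) := by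
        rw [← pow_add]; congr 1; omega
      have e2 : (5406/10000:ℝ)^(k-m) = (5406/10000)^(k-i) * (5406/10000)^(i-m) := by
        rw [← pow_add]; congr 1; omega
      have e3 : (5406/10000:ℝ)^(i-m) * (4594/5406)^(i-m) = (4594/10000)^(i-m) := by
        rw [← mul_pow]; norm_num
      rw [e1, e2]
      calc (4594/10000:ℝ)^m * (4594/10000)^(i-m) * (5406/10000)^(k-i)
          = (4594/10000:ℝ)^m * ((5406/10000)^(k-i) * (4594/10000)^(i-m)) := by ring
        _ = (4594/10000:ℝ)^m * ((5406/10000)^(k-i) * ((5406/10000)^(i-m) * (4594/5406)^(i-m))) := by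
            rw [e3]
        _ = _ := by ring
    calc (k.choose i : ℝ) * (4594/10000)^i * (5406/10000)^(k-i)
        = (k.choose i : ℝ) * ((4594/10000)^i * (5406/10000)^(k-i)) := by ring
      _ ≤ (k.choose m : ℝ) * ((4594/10000)^i * (5406/10000)^(k-i)) := by
          have := choose_anti (show k < 2*m by omega) hmi
          have hpos : (0:ℝ) ≤ (4594/10000:ℝ)^i * (5406/10000)^(k-i) := by positivity
          exact mul_le_mul_of_nonneg_right (by exact_mod_cast this) hpos
      _ = (k.choose m : ℝ) * (4594/10000)^m * (5406/10000)^(k-m) * (4594/5406)^(i-m) := by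
          rw [hterm]; ring
  refine le_trans (Finset.sum_le_sum key) ?_
  have hfact : ∑ i ∈ Finset.Ico m (k+1),
      (k.choose m : ℝ) * (4594/10000)^m * (5406/10000)^(k-m) * (4594/5406)^(i-m)
      = ((k.choose m : ℝ) * (4594/10000)^m * (5406/10000)^(k-m)) *
          ∑ i ∈ Finset.range (k+1-m), (4594/5406:ℝ)^i := by
    rw [Finset.mul_sum, Finset.sum_Ico_eq_sum_range]
    refine Finset.sum_congr rfl fun i _ => ?_
    rw [Nat.add_sub_cancel_left]
  rw [hfact]
  have hgeom : ∑ i ∈ Finset.range (k+1-m), (4594/5406:ℝ)^i ≤ 5406/812 := by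
    have h := geom_sum_eq (show (4594/5406:ℝ) ≠ 1 by norm_num) (k+1-m)
    rw [h, div_le_iff_of_neg (by norm_num : (4594/5406:ℝ) - 1 < 0)]
    have hp : (0:ℝ) ≤ (4594/5406:ℝ)^(k+1-m) := by positivity
    nlinarith
  have hc : (0:ℝ) ≤ (k.choose m : ℝ) * (4594/10000)^m * (5406/10000)^(k-m) := by positivity
  calc ((k.choose m : ℝ) * (4594/10000)^m * (5406/10000)^(k-m)) *
        ∑ i ∈ Finset.range (k+1-m), (4594/5406:ℝ)^i
      ≤ ((k.choose m : ℝ) * (4594/10000)^m * (5406/10000)^(k-m)) * (5406/812) :=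
        mul_le_mul_of_nonneg_left hgeom hc
    _ = _ := by ring

/-- Numeric endgame for even `k = 2(a+40)`. -/
lemma even_case (a : ℕ) (C : ℕ) (p q d T : ℝ)
    (hp : p = 4594/10000) (hq : q = 5406/10000) (hd : d = 5406/812)
    (hT : T = 439233846832/10^12)
    (hC2 : ((C:ℝ))^2 * (3*(a+40)+1) ≤ 16^(a+40)) :
    (C:ℝ) * p^(a+41) * q^(a+39) * d ≤ T := by
  have hTpos : 0 < T := by rw [hT]; norm_num
  have hp0 : (0:ℝ) ≤ p := by rw [hp]; norm_num
  have hq0 : (0:ℝ) ≤ q := by rw [hq]; norm_num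
  have hd0 : (0:ℝ) ≤ d := by rw [hd]; norm_num
  set B : ℝ := (C:ℝ) * p^(a+41) * q^(a+39) * d with hB
  have hBpos : 0 ≤ B := by
    rw [hB]
    exact mul_nonneg (mul_nonneg (mul_nonneg (Nat.cast_nonneg C)
      (pow_nonneg hp0 _)) (pow_nonneg hq0 _)) hd0
  have key : B^2 * (3*(a+40)+1) ≤
      (16*p^2*q^2)^a * ((16*p^2*q^2)^39 * (16 * p^4 * d^2)) := by
    have h1 : B^2 * (3*(a+40)+1)
        = ((C:ℝ)^2 * (3*(a+40)+1)) * ((p^(a+41))^2 * (q^(a+39))^2 * d^2) := by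
      rw [hB]; ring
    have h2 : ((C:ℝ)^2 * (3*(a+40)+1)) * ((p^(a+41))^2 * (q^(a+39))^2 * d^2)
        ≤ (16:ℝ)^(a+40) * ((p^(a+41))^2 * (q^(a+39))^2 * d^2) :=
      mul_le_mul_of_nonneg_right hC2
        (mul_nonneg (mul_nonneg (sq_nonneg _) (sq_nonneg _)) (sq_nonneg _))
    have h3 : (16:ℝ)^(a+40) * ((p^(a+41))^2 * (q^(a+39))^2 * d^2)
        = (16*p^2*q^2)^a * ((16*p^2*q^2)^39 * (16 * p^4 * d^2)) := by
      ring
    rw [h1, ← h3]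
    exact h2
  have hpq1 : (0:ℝ) ≤ 16*p^2*q^2 := by nlinarith [sq_nonneg (p*q)]
  have hle1 : ((16:ℝ)*p^2*q^2)^a ≤ 1 := by
    apply pow_le_one₀ hpq1
    rw [hp, hq]; norm_num
  have hZ : ((16:ℝ)*p^2*q^2)^39 * (16 * p^4 * d^2) ≤ 121 * T^2 := by
    rw [hp, hq, hd, hT]; norm_num
  have hZ0 : (0:ℝ) ≤ (16*p^2*q^2)^39 * (16 * p^4 * d^2) := by
    apply mul_nonneg (pow_nonneg hpq1 _)
    nlinarith [sq_nonneg (p*p*d), sq_nonneg (p*p), sq_nonneg d]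
  have hmul : ((16:ℝ)*p^2*q^2)^a * ((16*p^2*q^2)^39 * (16 * p^4 * d^2))
      ≤ 121 * T^2 := by
    calc ((16:ℝ)*p^2*q^2)^a * ((16*p^2*q^2)^39 * (16 * p^4 * d^2))
        ≤ 1 * ((16*p^2*q^2)^39 * (16 * p^4 * d^2)) :=
          mul_le_mul_of_nonneg_right hle1 hZ0
      _ = (16*p^2*q^2)^39 * (16 * p^4 * d^2) := by ring
      _ ≤ 121 * T^2 := hZ
  have h121 : (121:ℝ) ≤ 3*(a+40)+1 := by
    have : (0:ℝ) ≤ (a:ℝ) := Nat.cast_nonneg a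
    push_cast
    linarith
  have hBT : B^2 ≤ T^2 := by
    have hfin : B^2 * (3*(a+40)+1) ≤ T^2 * (3*(a+40)+1) := by
      calc B^2 * (3*(a+40)+1) ≤ 121 * T^2 := le_trans key hmul
        _ ≤ T^2 * (3*(a+40)+1) := by nlinarith [sq_nonneg T]
    have hden : (0:ℝ) < 3*(a+40)+1 := by positivity
    exact le_of_mul_le_mul_right hfin hden
  nlinarith

/-- Numeric endgame for odd `k = 2(a+40)+1`. -/
lemma odd_case (a : ℕ) (C : ℕ) (p q d T : ℝ)
    (hp : p = 4594/10000) (hq : q = 5406/10000) (hd : d = 5406/812)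
    (hT : T = 439233846832/10^12)
    (hC2 : ((C:ℝ))^2 * (3*(a+40)+4) ≤ 4 * 16^(a+40)) :
    (C:ℝ) * p^(a+41) * q^(a+40) * d ≤ T := by
  have hTpos : 0 < T := by rw [hT]; norm_num
  have hp0 : (0:ℝ) ≤ p := by rw [hp]; norm_num
  have hq0 : (0:ℝ) ≤ q := by rw [hq]; norm_num
  have hd0 : (0:ℝ) ≤ d := by rw [hd]; norm_num
  set B : ℝ := (C:ℝ) * p^(a+41) * q^(a+40) * d with hB
  have hBpos : 0 ≤ B := by
    rw [hB]
    exact mul_nonneg (mul_nonneg (mul_nonneg (Nat.cast_nonneg C)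
      (pow_nonneg hp0 _)) (pow_nonneg hq0 _)) hd0
  have key : B^2 * (3*(a+40)+4) ≤
      (16*p^2*q^2)^a * ((16*p^2*q^2)^40 * (4 * p^2 * d^2)) := by
    have h1 : B^2 * (3*(a+40)+4)
        = ((C:ℝ)^2 * (3*(a+40)+4)) * ((p^(a+41))^2 * (q^(a+40))^2 * d^2) := by
      rw [hB]; ring
    have h2 : ((C:ℝ)^2 * (3*(a+40)+4)) * ((p^(a+41))^2 * (q^(a+40))^2 * d^2)
        ≤ (4 * (16:ℝ)^(a+40)) * ((p^(a+41))^2 * (q^(a+40))^2 * d^2) :=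
      mul_le_mul_of_nonneg_right hC2
        (mul_nonneg (mul_nonneg (sq_nonneg _) (sq_nonneg _)) (sq_nonneg _))
    have h3 : (4 * (16:ℝ)^(a+40)) * ((p^(a+41))^2 * (q^(a+40))^2 * d^2)
        = (16*p^2*q^2)^a * ((16*p^2*q^2)^40 * (4 * p^2 * d^2)) := by
      ring
    rw [h1, ← h3]
    exact h2
  have hpq1 : (0:ℝ) ≤ 16*p^2*q^2 := by nlinarith [sq_nonneg (p*q)]
  have hle1 : ((16:ℝ)*p^2*q^2)^a ≤ 1 := by
    apply pow_le_one₀ hpq1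
    rw [hp, hq]; norm_num
  have hZ : ((16:ℝ)*p^2*q^2)^40 * (4 * p^2 * d^2) ≤ 124 * T^2 := by
    rw [hp, hq, hd, hT]; norm_num
  have hZ0 : (0:ℝ) ≤ (16*p^2*q^2)^40 * (4 * p^2 * d^2) := by
    apply mul_nonneg (pow_nonneg hpq1 _)
    nlinarith [sq_nonneg (p*d), sq_nonneg p, sq_nonneg d]
  have hmul : ((16:ℝ)*p^2*q^2)^a * ((16*p^2*q^2)^40 * (4 * p^2 * d^2))
      ≤ 124 * T^2 := by
    calc ((16:ℝ)*p^2*q^2)^a * ((16*p^2*q^2)^40 * (4 * p^2 * d^2))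
        ≤ 1 * ((16*p^2*q^2)^40 * (4 * p^2 * d^2)) :=
          mul_le_mul_of_nonneg_right hle1 hZ0
      _ = (16*p^2*q^2)^40 * (4 * p^2 * d^2) := by ring
      _ ≤ 124 * T^2 := hZ
  have h124 : (124:ℝ) ≤ 3*(a+40)+4 := by
    have : (0:ℝ) ≤ (a:ℝ) := Nat.cast_nonneg a
    push_cast
    linarith
  have hBT : B^2 ≤ T^2 := by
    have hfin : B^2 * (3*(a+40)+4) ≤ T^2 * (3*(a+40)+4) := by
      calc B^2 * (3*(a+40)+4) ≤ 124 * T^2 := le_trans key hmul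
        _ ≤ T^2 * (3*(a+40)+4) := by nlinarith [sq_nonneg T]
    have hden : (0:ℝ) < 3*(a+40)+4 := by positivity
    exact le_of_mul_le_mul_right hfin hden
  nlinarith

lemma binom3_val :
    binomialProb 3 0.4594 (fun i => 2 ≤ i) =
      3 * (0.4594 : ℝ) ^ 2 - 2 * (0.4594 : ℝ) ^ 3 := by
  have hfil : (Finset.range 4).filter (fun i => 2 ≤ i) = {2, 3} := by decide
  rw [binomialProb, hfil]
  rw [show ({2,3} : Finset ℕ) = insert 2 {3} from rfl,
    Finset.sum_insert (by decide), Finset.sum_singleton]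
  norm_num [Nat.choose]

/- **Statement 17.** With `p₁ = 0.4594`, for every `k ≠ 1` the probability
that `B(k, p₁) > k/2` is at most the probability that `B(3, p₁) ≥ 2`, and the
latter equals `3 p₁² − 2 p₁³`. -/
set_option maxHeartbeats 1000000 in
theorem binomial_majority_prob_le :
    (∀ k : ℕ, k ≠ 1 →
      binomialProb k 0.4594 (fun i => k < 2 * i) ≤
        binomialProb 3 0.4594 (fun i => 2 ≤ i)) ∧
    binomialProb 3 0.4594 (fun i => 2 ≤ i) =
      3 * (0.4594 : ℝ) ^ 2 - 2 * (0.4594 : ℝ) ^ 3 := by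
  have hT : binomialProb 3 0.4594 (fun i => 2 ≤ i) = 439233846832/10^12 := by
    rw [binom3_val]; norm_num
  refine ⟨fun k hk => ?_, binom3_val⟩
  rw [hT]
  rcases lt_or_ge k 80 with h80 | h80
  · -- small case: exact computation
    rw [binomialProb_cast]
    rw [div_le_div_iff₀ (by positivity) (by norm_num)]
    have hnat := Nk_small_le k h80 hk
    calc (Nk k : ℝ) * 10^12 = ((Nk k * 10^12 : ℕ) : ℝ) := by push_cast; ring
      _ ≤ ((439233846832 * 10^(4*k) : ℕ) : ℝ) := by exact_mod_cast hnat
      _ = 439233846832 * 10000^k := by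
          push_cast
          rw [pow_mul]
          norm_num
  · -- tail case: k ≥ 80
    refine le_trans (tail_le k (by omega)) ?_
    rcases Nat.even_or_odd k with ⟨j, hj⟩ | ⟨j, hj⟩
    · -- even: k = 2j, j ≥ 40
      obtain ⟨a, ha⟩ : ∃ a, j = a + 40 := ⟨j - 40, by omega⟩
      have hk2 : k = 2*(a+40) := by omega
      subst hk2
      have hm2 : 2*(a+40)/2+1 = a+41 := by omega
      have hkm : 2*(a+40) - (a+41) = a+39 := by omega
      rw [hm2, hkm]
      obtain ⟨C, hCdef⟩ : ∃ C, C = (2*(a+40)).choose (a+41) := ⟨_, rfl⟩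
      rw [← hCdef]
      have hCcb : C ≤ Nat.centralBinom (a+40) := by
        rw [hCdef]
        have := Nat.choose_le_middle (a+41) (2*(a+40))
        simpa [Nat.centralBinom, Nat.mul_div_cancel_left] using this
      have hCnat : (3*(a+40)+1) * C^2 ≤ 16^(a+40) :=
        le_trans (Nat.mul_le_mul_left _ (Nat.pow_le_pow_left hCcb 2)) (cb_sq (a+40))
      clear hCdef
      have hC2 : ((C : ℝ))^2 * (3*(a+40)+1) ≤ 16^(a+40) := by
        have := (Nat.cast_le (α := ℝ)).2 hCnat
        push_cast at this
        linarith
      exact even_case a C _ _ _ _ rfl rfl rfl rfl hC2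
    · -- odd: k = 2j+1, j ≥ 40
      obtain ⟨a, ha⟩ : ∃ a, j = a + 40 := ⟨j - 40, by omega⟩
      have hk2 : k = 2*(a+40)+1 := by omega
      subst hk2
      have hm2 : (2*(a+40)+1)/2+1 = a+41 := by omega
      have hkm : 2*(a+40)+1 - (a+41) = a+40 := by omega
      rw [hm2, hkm]
      obtain ⟨C, hCdef⟩ : ∃ C, C = (2*(a+40)+1).choose (a+41) := ⟨_, rfl⟩
      rw [← hCdef]
      have h2C : 2 * C = Nat.centralBinom (a+41) := by
        rw [hCdef]
        have hpas : (2*(a+40)+2).choose (a+41)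
            = (2*(a+40)+1).choose (a+40) + (2*(a+40)+1).choose (a+41) :=
          Nat.choose_succ_succ' (2*(a+40)+1) (a+40)
        have hsym : (2*(a+40)+1).choose (a+41) = (2*(a+40)+1).choose (a+40) :=
          Nat.choose_symm_half (a+40)
        have hcb : Nat.centralBinom (a+41) = (2*(a+40)+2).choose (a+41) := by
          unfold Nat.centralBinom
          congr 1
        omega
      have hCnat : (3*(a+40)+4) * (4 * C^2) ≤ 16 * 16^(a+40) := by
        have h := cb_sq (a+41)
        rw [← h2C] at h
        calc (3*(a+40)+4) * (4 * C^2)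
            = (3*(a+41)+1) * (2*C)^2 := by ring
          _ ≤ 16^(a+41) := h
          _ = 16 * 16^(a+40) := by rw [pow_succ]; ring
      clear hCdef
      have hC2 : ((C : ℝ))^2 * (3*(a+40)+4) ≤ 4 * 16^(a+40) := by
        have := (Nat.cast_le (α := ℝ)).2 hCnat
        push_cast at this
        linarith
      exact odd_case a C _ _ _ _ rfl rfl rfl rfl hC2
end

section
/- Let D₉ be the digraph on the nine vertices x₁,x₂,x₃,y₁,y₂,y₃,z₁,z₂,z₃ with edge set consisting of: all nine edges (y_j, x_i) for i,j ∈ {1,2,3}; the directed triangle edges (z₁,z₂), (z₂,z₃), (z₃,z₁); and all eighteen edges (z_i, x_j) and (z_i, y_j) for i,j ∈ {1,2,3}. Let p : {x₁,x₂,x₃} → {1,2} be a partial vertex-coloring. Then p can be extended to a majority coloring of D₉ using only colors 1 and 2 if and only if p(x_i) ≠ p(x_j) for some i,j ∈ {1,2,3}. -/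
open scoped Classical

variable {V : Type*} [Fintype V]

/-- The out-neighborhood of `v` in the digraph on `V` with edge relation `E`. -/
noncomputable def outNbrs (E : V → V → Prop) (v : V) : Finset V :=
  Finset.univ.filter (fun w => E v w)

/-- The in-neighborhood of `v` in the digraph on `V` with edge relation `E`. -/
noncomputable def inNbrs (E : V → V → Prop) (v : V) : Finset V :=
  Finset.univ.filter (fun w => E w v)

/-- `c` is a majority coloring of the digraph `(V, E)`: every vertex `v` has at
most `d⁺(v)/2` out-neighbors `w` with `c w = c v`. -/
def IsMajorityColoring {α : Type*} (E : V → V → Prop) (c : V → α) : Prop :=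
  ∀ v : V, 2 * ((outNbrs E v).filter (fun w => c w = c v)).card ≤ (outNbrs E v).card

/-- `l` is the vertex list of a directed cycle: a nonempty list of pairwise
distinct vertices in which each vertex has an edge to the next one, and the
last vertex has an edge back to the first one. -/
def IsDiCycle (E : V → V → Prop) (l : List V) : Prop :=
  l ≠ [] ∧ l.Nodup ∧ l.Chain' E ∧
    ∃ a b, l.head? = some a ∧ l.getLast? = some b ∧ E b a

/-- All vertices of the list `l` get the same color under `c`. -/
def MonochromaticList {α : Type*} (c : V → α) (l : List V) : Prop :=
  ∀ u ∈ l, ∀ w ∈ l, c u = c w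

/-- The digraph `(V, E)` is majority `k`-choosable: for every assignment of
lists of size at least `k` to the vertices there is a majority coloring
choosing each vertex's color from its list. -/
def MajorityChoosable (E : V → V → Prop) (k : ℕ) : Prop :=
  ∀ L : V → Finset ℕ, (∀ v, k ≤ (L v).card) →
    ∃ c : V → ℕ, (∀ v, c v ∈ L v) ∧ IsMajorityColoring E c

/-- The vertex set of the digraph `D₉`: three vertices `x₁,x₂,x₃`, three
vertices `y₁,y₂,y₃` and three vertices `z₁,z₂,z₃`. -/
abbrev V9 : Type := Fin 3 ⊕ (Fin 3 ⊕ Fin 3)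

/-- The vertex `xᵢ` of `D₉`. -/
def xv (i : Fin 3) : V9 := Sum.inl i

/-- The vertex `yⱼ` of `D₉`. -/
def yv (j : Fin 3) : V9 := Sum.inr (Sum.inl j)

/-- The vertex `zᵢ` of `D₉`. -/
def zv (i : Fin 3) : V9 := Sum.inr (Sum.inr i)

/-- The edge relation of `D₉`: all nine edges `(yⱼ, xᵢ)`, the directed
triangle `(z₁,z₂), (z₂,z₃), (z₃,z₁)`, and all eighteen edges `(zᵢ, xⱼ)` and
`(zᵢ, yⱼ)`. -/
def E9 : V9 → V9 → Prop := fun a b =>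
  (∃ j i : Fin 3, a = yv j ∧ b = xv i) ∨
  (∃ i : Fin 3, a = zv i ∧ b = zv (i + 1)) ∨
  (∃ i j : Fin 3, a = zv i ∧ (b = xv j ∨ b = yv j))


instance E9.dec : DecidableRel E9 := fun a b => by
  unfold E9 xv yv zv; infer_instance

lemma maj_iff9 (c : V9 → Fin 2) : IsMajorityColoring E9 c ↔
    ∀ v : V9, 2 * ((Finset.univ.filter (fun w => E9 v w)).filter
      (fun w => c w = c v)).card ≤ (Finset.univ.filter (fun w => E9 v w)).card := by
  unfold IsMajorityColoring outNbrs
  refine forall_congr' fun v => ?_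
  rw [Finset.filter_congr_decidable, Finset.filter_congr_decidable]
  congr!

/-- A partial coloring `p` of the vertices `x₁,x₂,x₃` of
`D₉` with colors `{1,2}` extends to a majority coloring of `D₉` using colors
`{1,2}` if and only if `p(xᵢ) ≠ p(xⱼ)` for some `i, j`. -/
theorem D9_precoloring_extends_iff (p : Fin 3 → Fin 2) :
    (∃ c : V9 → Fin 2, IsMajorityColoring E9 c ∧ ∀ i : Fin 3, c (xv i) = p i) ↔
      ∃ i j : Fin 3, p i ≠ p j := by
  simp only [maj_iff9]
  set_option maxRecDepth 100000 in
  revert p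
  decide
end
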